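/- If U is a Nielsen reduced subset of a free group F, then U is a free basis of the subgroup it generates; in particular, no nonempty reduced product of elements of U^{±1} without adjacent inverse pairs equals the identity. -/

import Mathlib

/-- The free length of an element of a free group. -/
def freeLen {α : Type*} [DecidableEq α] (w : FreeGroup α) : ℕ := w.toWord.length

/-- A set of elements of a free group is Nielsen reduced if conditions
(N0), (N1), (N2) hold for all triples of elements of the form `u^{±1}`, `u ∈ U`. -/
def IsNielsenReduced {α : Type*} [DecidableEq α] (U : Set (FreeGroup α)) : Prop :=
  ∀ v₁ v₂ v₃ : FreeGroup α,
    (∃ u ∈ U, v₁ = u ∨ v₁ = u⁻¹) → (∃ u ∈ U, v₂ = u ∨ v₂ = u⁻¹) →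
    (∃ u ∈ U, v₃ = u ∨ v₃ = u⁻¹) →
    v₁ ≠ 1 ∧
    (v₁ * v₂ ≠ 1 → freeLen v₁ ≤ freeLen (v₁ * v₂) ∧ freeLen v₂ ≤ freeLen (v₁ * v₂)) ∧
    (v₁ * v₂ ≠ 1 → v₂ * v₃ ≠ 1 →
      (freeLen v₁ : ℤ) - freeLen v₂ + freeLen v₃ < freeLen (v₁ * v₂ * v₃))

namespace NielsenAux

open FreeGroup

variable {α : Type*} [DecidableEq α]

/-- Longest common prefix length of two words. -/
def cp : List (α × Bool) → List (α × Bool) → ℕ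
  | [], _ => 0
  | _, [] => 0
  | a :: as, b :: bs => if a = b then cp as bs + 1 else 0

lemma cp_nil_left (b : List (α × Bool)) : cp [] b = 0 := by cases b <;> rfl

lemma cp_nil_right (a : List (α × Bool)) : cp a [] = 0 := by cases a <;> rfl

lemma cp_le_left : ∀ a b : List (α × Bool), cp a b ≤ a.length := by
  intro a
  induction a with
  | nil => intro b; simp [cp_nil_left]
  | cons p as ih =>
    intro b
    cases b with
    | nil => simp [cp_nil_right]
    | cons q bs =>
      simp only [cp, List.length_cons]
      split_ifs
      · exact Nat.succ_le_succ (ih bs)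
      · omega

lemma cp_min : ∀ a b c : List (α × Bool), cp a c ≤ cp a b ∨ cp c b ≤ cp a b := by
  intro a
  induction a with
  | nil => intro b c; left; simp [cp_nil_left]
  | cons p as ih =>
    intro b c
    cases c with
    | nil => left; simp [cp_nil_right]
    | cons r cs =>
      cases b with
      | nil => right; simp [cp_nil_right]
      | cons q bs =>
        by_cases h1 : p = r
        · by_cases h2 : r = q
          · subst h1; subst h2
            rcases ih bs cs with h | h
            · left; simp only [cp, if_pos rfl, eq_self_iff_true, if_true]; omega
            · right; simp only [cp, if_pos rfl, eq_self_iff_true, if_true]; omega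
          · right
            have : cp (r :: cs) (q :: bs) = 0 := by simp [cp, h2]
            simp [this]
        · left
          have : cp (p :: as) (r :: cs) = 0 := by simp [cp, h1]
          simp [this]

/-- The tail of a reduced word is reduced. -/
lemma reduced_tail {p : α × Bool} {l : List (α × Bool)}
    (h : reduce (p :: l) = p :: l) : reduce l = l := by
  rcases hr : reduce l with _ | ⟨y, t⟩
  · rw [reduce.cons, hr] at h
    have h' : [p] = p :: l := h
    have hl : l = [] := by simpa using h'.symm
    subst hl; rfl
  · rw [reduce.cons, hr] at h
    have h' : (if p.1 = y.1 ∧ p.2 = !y.2 then t else p :: y :: t) = p :: l := h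
    by_cases hc : p.1 = y.1 ∧ p.2 = !y.2
    · rw [if_pos hc] at h'
      have hlen := FreeGroup.Red.length_le (FreeGroup.reduce.red (L := l))
      rw [hr] at hlen
      have := congrArg List.length h'
      simp only [List.length_cons] at this hlen
      omega
    · rw [if_neg hc] at h'
      have h2 : y :: t = l := by
        simpa using h'
      exact h2

/-- In a reduced word, the first two letters do not cancel. -/
lemma not_cancel_of_reduced {p q : α × Bool} {l : List (α × Bool)}
    (h : reduce (p :: q :: l) = p :: q :: l) : ¬(p.1 = q.1 ∧ p.2 = !q.2) := by
  intro hc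
  have h2 : reduce (q :: l) = q :: l := reduced_tail h
  rw [reduce.cons, h2] at h
  have h' : (if p.1 = q.1 ∧ p.2 = !q.2 then l else p :: q :: l) = p :: q :: l := h
  rw [if_pos hc] at h'
  have := congrArg List.length h'
  simp only [List.length_cons] at this
  omega

lemma reduced_cons {p : α × Bool} {l : List (α × Bool)} (hl : reduce l = l)
    (hpq : ∀ q, l.head? = some q → ¬(p.1 = q.1 ∧ p.2 = !q.2)) :
    reduce (p :: l) = p :: l := by
  rw [reduce.cons, hl]
  cases l with
  | nil => rfl
  | cons q t =>
    have hq := hpq q rfl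
    show (if p.1 = q.1 ∧ p.2 = !q.2 then t else p :: q :: t) = p :: q :: t
    rw [if_neg hq]

lemma reduced_append : ∀ a b : List (α × Bool), reduce a = a → reduce b = b →
    (∀ p q, a.getLast? = some p → b.head? = some q → ¬(p.1 = q.1 ∧ p.2 = !q.2)) →
    reduce (a ++ b) = a ++ b := by
  intro a
  induction a with
  | nil => intro b _ hb _; simpa using hb
  | cons p a' ih =>
    intro b ha hb hj
    have ha' := reduced_tail ha
    cases a' with
    | nil =>
      simp only [List.cons_append, List.nil_append]
      exact reduced_cons hb (fun q hq => hj p q rfl hq)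
    | cons y t =>
      have hrec : reduce ((y :: t) ++ b) = (y :: t) ++ b := by
        apply ih b ha' hb
        intro p' q hp' hq
        apply hj p' q _ hq
        rw [List.getLast?_cons_cons]
        exact hp'
      simp only [List.cons_append] at hrec ⊢
      apply reduced_cons hrec
      intro q hq
      simp only [List.head?_cons, Option.some.injEq] at hq
      rw [← hq]
      exact not_cancel_of_reduced ha

omit [DecidableEq α] in
lemma invRev_cons (p : α × Bool) (l : List (α × Bool)) :
    invRev (p :: l) = invRev l ++ [(p.1, !p.2)] := by
  simp [invRev]

lemma reduce_invRev_self {a : List (α × Bool)} (ha : reduce a = a) :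
    reduce (invRev a) = invRev a := by
  rw [reduce_invRev, ha]

/-- The core cancellation lemma: the length of the reduced form of
`a⁻¹ ++ b` is governed by the longest common prefix of `a` and `b`. -/
lemma core : ∀ a b : List (α × Bool), reduce a = a → reduce b = b →
    (reduce (invRev a ++ b)).length + 2 * cp a b = a.length + b.length := by
  intro a
  induction a with
  | nil =>
    intro b _ hb
    simp [cp_nil_left, invRev, hb]
  | cons p a' ih =>
    intro b ha hb
    have ha' := reduced_tail ha
    cases b with
    | nil =>
      have h1 : reduce (invRev (p :: a') ++ ([] : List (α × Bool))) = invRev (p :: a') := by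
        rw [List.append_nil]; exact reduce_invRev_self ha
      rw [h1, cp_nil_right]
      simp
    | cons q b' =>
      by_cases hpq : p = q
      · subst hpq
        have hb' := reduced_tail hb
        have key : reduce (invRev (p :: a') ++ (p :: b')) = reduce (invRev a' ++ b') := by
          rw [invRev_cons]
          have he : invRev a' ++ [(p.1, !p.2)] ++ p :: b'
              = invRev a' ++ (p.1, !p.2) :: (p.1, !(!p.2)) :: b' := by
            simp
          rw [he]
          exact FreeGroup.reduce.Step.eq FreeGroup.Red.Step.not
        rw [key]
        have hih := ih b' ha' hb'
        have hcp : cp (p :: a') (p :: b') = cp a' b' + 1 := by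
          simp [cp]
        rw [hcp]
        simp only [List.length_cons]
        omega
      · have hcp : cp (p :: a') (q :: b') = 0 := by
          simp [cp, hpq]
        have hred : reduce (invRev (p :: a') ++ (q :: b')) = invRev (p :: a') ++ (q :: b') := by
          apply reduced_append _ _ (reduce_invRev_self ha) hb
          intro p' q' hp' hq'
          rw [invRev_cons] at hp'
          rw [List.getLast?_concat] at hp'
          simp only [Option.some.injEq] at hp'
          simp only [List.head?_cons, Option.some.injEq] at hq'
          rw [← hp', ← hq']
          rintro ⟨h1, h2⟩
          apply hpq
          have h1' : p.1 = q.1 := h1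
          have h2' : p.2 = q.2 := by simpa using h2
          exact Prod.ext h1' h2'
        rw [hred, hcp]
        simp only [List.length_append, List.length_cons, FreeGroup.invRev_length]
        omega

/-- Gromov product at the identity, as the longest common prefix length. -/
def gp (x y : FreeGroup α) : ℤ := cp x.toWord y.toWord

lemma toWord_inv_mul (x y : FreeGroup α) :
    (x⁻¹ * y).toWord = reduce (invRev x.toWord ++ y.toWord) := by
  conv_lhs => rw [← mk_toWord (x := x), ← mk_toWord (x := y)]
  rw [inv_mk, mul_mk, toWord_mk]

lemma gp_formula (x y : FreeGroup α) :
    (freeLen (x⁻¹ * y) : ℤ) = freeLen x + freeLen y - 2 * gp x y := by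
  have h := core x.toWord y.toWord (reduce_toWord x) (reduce_toWord y)
  have h2 := toWord_inv_mul x y
  unfold freeLen gp
  rw [h2]
  omega

lemma freeLen_inv (x : FreeGroup α) : freeLen x⁻¹ = freeLen x := by
  unfold freeLen
  rw [toWord_inv, invRev_length]

lemma mul_formula (x y : FreeGroup α) :
    (freeLen (x * y) : ℤ) = freeLen x + freeLen y - 2 * gp x⁻¹ y := by
  have h := gp_formula x⁻¹ y
  rw [inv_inv, freeLen_inv] at h
  exact h

lemma gp_comm (x y : FreeGroup α) : gp x y = gp y x := by
  have h1 := gp_formula x y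
  have h2 := gp_formula y x
  have h3 : freeLen (x⁻¹ * y) = freeLen (y⁻¹ * x) := by
    rw [← freeLen_inv (x⁻¹ * y), mul_inv_rev, inv_inv]
  omega

lemma gp_min (x y z : FreeGroup α) : gp x z ≤ gp x y ∨ gp z y ≤ gp x y := by
  unfold gp
  rcases cp_min x.toWord y.toWord z.toWord with h | h
  · left; exact_mod_cast h
  · right; exact_mod_cast h

lemma gp_nonneg (x y : FreeGroup α) : 0 ≤ gp x y := Int.natCast_nonneg _

lemma gp_le_left (x y : FreeGroup α) : gp x y ≤ (freeLen x : ℤ) := by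
  unfold gp freeLen
  exact_mod_cast cp_le_left x.toWord y.toWord

lemma freeLen_pos {x : FreeGroup α} (hx : x ≠ 1) : 1 ≤ (freeLen x : ℤ) := by
  unfold freeLen
  have : x.toWord ≠ [] := fun h => hx (FreeGroup.toWord_eq_nil_iff.mp h)
  have : x.toWord.length ≠ 0 := fun h => this (List.length_eq_zero_iff.mp h)
  omega

section Main

variable (U : Set (FreeGroup α))

/-- Membership in `U^{±1}`. -/
def Mem (x : FreeGroup α) : Prop := ∃ u ∈ U, x = u ∨ x = u⁻¹

variable {U}

lemma key_ineq (hU : IsNielsenReduced U) {x y z : FreeGroup α}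
    (hx : Mem U x) (hy : Mem U y) (hz : Mem U z)
    (hxy : x * y ≠ 1) (hyz : y * z ≠ 1) :
    gp x⁻¹ y + gp y⁻¹ z < (freeLen y : ℤ) := by
  have hN2 := (hU x y z hx hy hz).2.2 hxy hyz
  -- identities
  have e1 : (freeLen (x * (y * z)) : ℤ)
      = freeLen x + freeLen (y * z) - 2 * gp x⁻¹ (y * z) := mul_formula x (y * z)
  have e3 : (freeLen (y⁻¹ * (y * z)) : ℤ)
      = freeLen y + freeLen (y * z) - 2 * gp y (y * z) := gp_formula y (y * z)
  have e4 : (freeLen (y * z) : ℤ) = freeLen y + freeLen z - 2 * gp y⁻¹ z := mul_formula y z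
  have hyyz : y⁻¹ * (y * z) = z := by group
  rw [hyyz] at e3
  have hassoc : x * (y * z) = x * y * z := (mul_assoc x y z).symm
  rw [hassoc] at e1
  rcases gp_min x⁻¹ (y * z) y with hmin | hmin <;> omega

lemma main_aux (hU : IsNielsenReduced U) :
    ∀ (l : List (FreeGroup α)) (y : FreeGroup α),
      (∀ w ∈ y :: l, Mem U w) →
      (y :: l).Chain' (fun a b => a * b ≠ 1) →
      ∀ x, Mem U x → x * y ≠ 1 →
        gp x⁻¹ ((y :: l).prod) = gp x⁻¹ y ∧
        gp x⁻¹ y < (freeLen ((y :: l).prod) : ℤ) := by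
  intro l
  induction l with
  | nil =>
    intro y hmem _ x hx hxy
    have hy : Mem U y := hmem y (by simp)
    have hprod : ([y] : List (FreeGroup α)).prod = y := by simp
    rw [hprod]
    refine ⟨rfl, ?_⟩
    -- N1 gives 2 * gp x⁻¹ y ≤ freeLen y
    have hN1 := ((hU x y y hx hy hy).2.1 hxy).1
    have hf : (freeLen (x * y) : ℤ) = freeLen x + freeLen y - 2 * gp x⁻¹ y := mul_formula x y
    have hypos : 1 ≤ (freeLen y : ℤ) := freeLen_pos ((hU y y y hy hy hy).1)
    have hnn := gp_nonneg x⁻¹ y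
    omega
  | cons z l' ih =>
    intro y hmem hch x hx hxy
    have hy : Mem U y := hmem y (by simp)
    have hz : Mem U z := hmem z (by simp)
    have hmem' : ∀ w ∈ z :: l', Mem U w := fun w hw => hmem w (List.mem_cons_of_mem _ hw)
    rw [List.Chain', List.isChain_cons_cons] at hch
    obtain ⟨hyz, hch'⟩ := hch
    obtain ⟨ih1, ih2⟩ := ih z hmem' hch' y hy hyz
    set t' := (z :: l').prod with ht'
    have hprod : ((y :: z :: l').prod) = y * t' := by rw [List.prod_cons]
    rw [hprod]
    set A := gp x⁻¹ y with hA
    set B := gp y⁻¹ z with hB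
    -- length of t = y * t'
    have bt : (freeLen (y * t') : ℤ) = freeLen y + freeLen t' - 2 * B := by
      have := mul_formula y t'
      rw [ih1] at this
      exact this
    have hK : A + B < (freeLen y : ℤ) := key_ineq hU hx hy hz hxy hyz
    constructor
    · -- gp x⁻¹ (y * t') = A
      have hH : gp y (y * t') = (freeLen y : ℤ) - B := by
        have e3 : (freeLen (y⁻¹ * (y * t')) : ℤ)
            = freeLen y + freeLen (y * t') - 2 * gp y (y * t') := gp_formula y (y * t')
        have hyy : y⁻¹ * (y * t') = t' := by group
        rw [hyy] at e3
        omega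
      have h1 := gp_min x⁻¹ (y * t') y
      have h2 := gp_min x⁻¹ y (y * t')
      have hc : gp (y * t') y = gp y (y * t') := gp_comm _ _
      rw [hc] at h2
      rw [hH] at h1 h2
      rcases h1 with h1 | h1 <;> rcases h2 with h2 | h2 <;> omega
    · -- A < freeLen (y * t')
      omega

end Main

end NielsenAux

theorem nielsen_reduced_is_free_basis {α : Type*} [DecidableEq α]
    (U : Set (FreeGroup α)) (hU : IsNielsenReduced U)
    (v : List (FreeGroup α)) (hne : v ≠ [])
    (hmem : ∀ x ∈ v, ∃ u ∈ U, x = u ∨ x = u⁻¹)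
    (hred : v.Chain' fun a b => a * b ≠ 1) :
    v.prod ≠ 1 := by
  open NielsenAux in
  match v with
  | [] => exact absurd rfl hne
  | [x] =>
    have hx : NielsenAux.Mem U x := hmem x (by simp)
    simpa using (hU x x x hx hx hx).1
  | x :: y :: l =>
    have hx : NielsenAux.Mem U x := hmem x (by simp)
    rw [List.Chain', List.isChain_cons_cons] at hred
    obtain ⟨hxy, hch⟩ := hred
    obtain ⟨h1, h2⟩ := NielsenAux.main_aux hU l y
      (fun w hw => hmem w (List.mem_cons_of_mem _ hw)) hch x hx hxy
    set t := ((y :: l).prod) with ht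
    have hprod : ((x :: y :: l).prod) = x * t := by rw [List.prod_cons]
    rw [hprod]
    have hf : (freeLen (x * t) : ℤ) = freeLen x + freeLen t - 2 * gp x⁻¹ t :=
      NielsenAux.mul_formula x t
    rw [h1] at hf
    have hle : NielsenAux.gp x⁻¹ y ≤ (freeLen x : ℤ) := by
      have := NielsenAux.gp_le_left x⁻¹ y
      rw [NielsenAux.freeLen_inv] at this
      exact this
    have hpos : 0 < (freeLen (x * t) : ℤ) := by omega
    intro hone
    rw [hone] at hpos
    simp [freeLen, FreeGroup.toWord_one] at hpos
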